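/- arXiv:2004.08873 — 3 statements merged into one kernel-verified Lean document; each statement's English description precedes it below -/
import Mathlib

section
/- Let (R, m) be a Noetherian local ring, I = (f_1,...,f_r) an ideal, J an ideal of R, and k ≥ 0 an integer such that m^{k+1} + I = J m^k + I (i.e., J is a reduction of m modulo I with reduction number at most k). Then for every perturbed ideal I' = (f_1+ε_1,...,f_r+ε_r) with ε_i ∈ m^{k+2}, one has m^{k+2} + I' = J m^{k+1} + I'. In particular, J is a reduction of m modulo I' with reduction number at most k+1. -/
open IsLocalRing Filter

/-- The length of an `R`-module `M`, defined as the Krull dimension of its lattice of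
submodules (the supremum of lengths of strictly increasing chains of submodules). -/
noncomputable def modLen (R : Type) [CommRing R] (M : Type) [AddCommGroup M] [Module R M] :
    WithBot ℕ∞ := Order.krullDim (Submodule R M)

/-- The length of the `i`-th local cohomology module of `M` with support in `J`. -/
noncomputable def lcLen (R : Type) [CommRing R] (J : Ideal R) (i : ℕ) (M : Type)
    [AddCommGroup M] [Module R M] : WithBot ℕ∞ :=
  modLen R ((localCohomology J i).obj (ModuleCat.of R M))
theorem statement2 (R : Type) [CommRing R] [IsNoetherianRing R] [IsLocalRing R]
    (r k : ℕ) (f : Fin r → R) (I J : Ideal R) (hI : I = Ideal.span (Set.range f))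
    (hred : maximalIdeal R ^ (k + 1) ⊔ I = J * maximalIdeal R ^ k ⊔ I)
    (ε : Fin r → R) (hε : ∀ i, ε i ∈ maximalIdeal R ^ (k + 2)) :
    maximalIdeal R ^ (k + 2) ⊔ Ideal.span (Set.range fun i => f i + ε i) =
      J * maximalIdeal R ^ (k + 1) ⊔ Ideal.span (Set.range fun i => f i + ε i) := by
  set m := maximalIdeal R
  set I' : Ideal R := Ideal.span (Set.range fun i => f i + ε i)
  -- I ≤ I' ⊔ m^{k+2}
  have hII' : I ≤ I' ⊔ m ^ (k + 2) := by
    rw [hI, Ideal.span_le]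
    rintro x ⟨i, rfl⟩
    have : f i = (f i + ε i) - ε i := by ring
    rw [this]
    exact Submodule.sub_mem _
      (Ideal.mem_sup_left (Ideal.subset_span ⟨i, rfl⟩))
      (Ideal.mem_sup_right (hε i))
  -- I' ≤ I ⊔ m^{k+2}
  have hI'I : I' ≤ I ⊔ m ^ (k + 2) := by
    rw [Ideal.span_le]
    rintro x ⟨i, rfl⟩
    exact Submodule.add_mem _
      (Ideal.mem_sup_left (hI ▸ Ideal.subset_span ⟨i, rfl⟩))
      (Ideal.mem_sup_right (hε i))
  have hm1 : m ^ (k + 1) ≤ J * m ^ k ⊔ I := hred ▸ le_sup_left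
  -- key : m^{k+2} ≤ (J m^{k+1} ⊔ I') ⊔ m * m^{k+2}
  have hkey : m ^ (k + 2) ≤ (J * m ^ (k + 1) ⊔ I') ⊔ m * m ^ (k + 2) := by
    have h1 : m ^ (k + 2) ≤ m * (J * m ^ k ⊔ I) := by
      calc m ^ (k + 2) = m * m ^ (k + 1) := by ring
        _ ≤ m * (J * m ^ k ⊔ I) := Ideal.mul_mono_right hm1
    have h2 : m * (J * m ^ k ⊔ I) = m * (J * m ^ k) ⊔ m * I := Ideal.mul_sup _ _ _
    have h3 : m * (J * m ^ k) = J * m ^ (k + 1) := by ring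
    have h4 : m * I ≤ I' ⊔ m * m ^ (k + 2) := by
      calc m * I ≤ m * (I' ⊔ m ^ (k + 2)) := Ideal.mul_mono_right hII'
        _ = m * I' ⊔ m * m ^ (k + 2) := Ideal.mul_sup _ _ _
        _ ≤ I' ⊔ m * m ^ (k + 2) := sup_le_sup_right Ideal.mul_le_right _
    calc m ^ (k + 2) ≤ J * m ^ (k + 1) ⊔ m * I := by rw [← h3, ← h2]; exact h1
      _ ≤ J * m ^ (k + 1) ⊔ (I' ⊔ m * m ^ (k + 2)) := sup_le_sup_left h4 _
      _ = (J * m ^ (k + 1) ⊔ I') ⊔ m * m ^ (k + 2) := by rw [sup_assoc]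
  refine le_antisymm (sup_le ?_ le_sup_right) (sup_le ?_ le_sup_right)
  · -- Nakayama
    have hfg : (m ^ (k + 2)).FG := IsNoetherian.noetherian _
    have hjac : m ≤ Ideal.jacobson ⊥ := IsLocalRing.maximalIdeal_le_jacobson _
    have := Submodule.le_of_le_smul_of_le_jacobson_bot hfg hjac
      (by rw [Ideal.smul_eq_mul]; exact hkey)
    exact this
  · -- J m^{k+1} ≤ m^{k+2} ⊔ I'
    calc J * m ^ (k + 1) = J * m ^ k * m := by ring
      _ ≤ (J * m ^ k ⊔ I) * m := Ideal.mul_mono_left le_sup_left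
      _ = (m ^ (k + 1) ⊔ I) * m := by rw [hred]
      _ = m ^ (k + 1) * m ⊔ I * m := Ideal.sup_mul _ _ _
      _ ≤ m ^ (k + 2) ⊔ I := by
          apply sup_le
          · exact le_sup_of_le_left (le_of_eq (by ring))
          · exact le_sup_of_le_right Ideal.mul_le_left
      _ ≤ m ^ (k + 2) ⊔ (I' ⊔ m ^ (k + 2)) := sup_le_sup_left hII' _
      _ ≤ m ^ (k + 2) ⊔ I' := by
          rw [sup_comm I' _, ← sup_assoc, sup_idem]
end

section
/- Let (R, m) be a Noetherian local ring and x_1,...,x_s a d-sequence on R/I for an ideal I, with J' = (x_1,...,x_s) (images in R/I). Then for all m ≥ 0, (I + J')^{m+1} ∩ I = I (I + J')^m. -/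
section HunekeAux

variable {R : Type} [CommRing R] {s : ℕ} (I : Ideal R) (x : Fin s → R)

/-- `Dn I x t = I + (x_0, ..., x_{t-1})`. -/
noncomputable def Dn (t : ℕ) : Ideal R :=
  I ⊔ Ideal.span (x '' {l : Fin s | (l : ℕ) < t})

/-- `Fn x i t = (x_i, ..., x_{t-1})`. -/
noncomputable def Fn (i t : ℕ) : Ideal R :=
  Ideal.span (x '' {l : Fin s | i ≤ (l : ℕ) ∧ (l : ℕ) < t})

variable {I x}

lemma Dn_mono {t t' : ℕ} (h : t ≤ t') : Dn I x t ≤ Dn I x t' :=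
  sup_le_sup_left (Ideal.span_mono (Set.image_mono (fun l hl => lt_of_lt_of_le hl h))) _

lemma Dn_zero : Dn I x 0 = I := by
  have : {l : Fin s | (l : ℕ) < 0} = ∅ := by ext l; simp
  simp [Dn, this]

lemma Dn_succ {t : ℕ} (ht : t < s) :
    Dn I x (t + 1) = Dn I x t ⊔ Ideal.span {x ⟨t, ht⟩} := by
  have hset : {l : Fin s | (l : ℕ) < t + 1} = {l : Fin s | (l : ℕ) < t} ∪ {⟨t, ht⟩} := by
    ext l
    simp only [Set.mem_setOf_eq, Set.union_singleton, Set.mem_insert_iff]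
    constructor
    · intro h
      rcases Nat.lt_succ_iff_lt_or_eq.1 h with h | h
      · exact Or.inr h
      · exact Or.inl (Fin.ext h)
    · rintro (rfl | h)
      · exact Nat.lt_succ_self t
      · exact Nat.lt_succ_of_lt h
  rw [Dn, hset, Set.image_union, Ideal.span_union, Dn, Set.image_singleton]
  rw [sup_assoc]

lemma Fn_zero {i : ℕ} : Fn x i 0 = ⊥ := by
  have : {l : Fin s | i ≤ (l : ℕ) ∧ (l : ℕ) < 0} = ∅ := by ext l; simp
  simp [Fn, this]

lemma Fn_succ {i t : ℕ} (hit : i ≤ t) (ht : t < s) :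
    Fn x i (t + 1) = Fn x i t ⊔ Ideal.span {x ⟨t, ht⟩} := by
  have hset : {l : Fin s | i ≤ (l : ℕ) ∧ (l : ℕ) < t + 1} =
      {l : Fin s | i ≤ (l : ℕ) ∧ (l : ℕ) < t} ∪ {⟨t, ht⟩} := by
    ext l
    simp only [Set.mem_setOf_eq, Set.union_singleton, Set.mem_insert_iff]
    constructor
    · rintro ⟨h1, h2⟩
      rcases Nat.lt_succ_iff_lt_or_eq.1 h2 with h | h
      · exact Or.inr ⟨h1, h⟩
      · exact Or.inl (Fin.ext h)
    · rintro (rfl | ⟨h1, h2⟩)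
      · exact ⟨hit, Nat.lt_succ_self t⟩
      · exact ⟨h1, Nat.lt_succ_of_lt h2⟩
  rw [Fn, hset, Set.image_union, Ideal.span_union, Fn, Set.image_singleton]

lemma Fn_succ_of_not {i t : ℕ} (h : ¬ (i ≤ t ∧ t < s)) : Fn x i (t + 1) = Fn x i t := by
  have hset : {l : Fin s | i ≤ (l : ℕ) ∧ (l : ℕ) < t + 1} =
      {l : Fin s | i ≤ (l : ℕ) ∧ (l : ℕ) < t} := by
    ext l
    simp only [Set.mem_setOf_eq]
    constructor
    · rintro ⟨h1, h2⟩
      refine ⟨h1, ?_⟩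
      rcases Nat.lt_succ_iff_lt_or_eq.1 h2 with h' | h'
      · exact h'
      · exact absurd ⟨h' ▸ h1, h' ▸ l.isLt⟩ h
    · rintro ⟨h1, h2⟩
      exact ⟨h1, Nat.lt_succ_of_lt h2⟩
  rw [Fn, hset, Fn]

lemma Fn_le_Dn {i t : ℕ} : Fn x i t ≤ Dn I x t :=
  le_sup_of_le_right (Ideal.span_mono (Set.image_mono (fun l hl => hl.2)))

lemma Dn_eq_sup_Fn {i t : ℕ} (hit : i ≤ t) : Dn I x t = Dn I x i ⊔ Fn x i t := by
  have hset : {l : Fin s | (l : ℕ) < t} =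
      {l : Fin s | (l : ℕ) < i} ∪ {l : Fin s | i ≤ (l : ℕ) ∧ (l : ℕ) < t} := by
    ext l
    simp only [Set.mem_setOf_eq, Set.mem_union]
    constructor
    · intro h
      rcases lt_or_ge (l : ℕ) i with h' | h'
      · exact Or.inl h'
      · exact Or.inr ⟨h', h⟩
    · rintro (h | ⟨h1, h2⟩)
      · exact lt_of_lt_of_le h hit
      · exact h2
  rw [Dn, hset, Set.image_union, Ideal.span_union, Dn, Fn, sup_assoc]

lemma span_range_eq_Dn_sup_Fn {i : ℕ} (hi : i ≤ s) :
    Ideal.span (Set.range x) ≤ Dn I x i ⊔ Fn x i s := by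
  have hrange : Set.range x = x '' {l : Fin s | (l : ℕ) < s} := by
    ext r
    constructor
    · rintro ⟨l, rfl⟩; exact ⟨l, l.isLt, rfl⟩
    · rintro ⟨l, -, rfl⟩; exact ⟨l, rfl⟩
  calc Ideal.span (Set.range x) = Ideal.span (x '' {l : Fin s | (l : ℕ) < s}) := by
        rw [hrange]
    _ ≤ Dn I x s := le_sup_right
    _ = Dn I x i ⊔ Fn x i s := Dn_eq_sup_Fn hi

section WithHd

variable (hd : ∀ i j : Fin s, i ≤ j → ∀ r : R,
    (r * (x i * x j) ∈ Dn I x i ↔ r * x j ∈ Dn I x i))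

include hd

/-- If `y * x_i ∈ D_i` then `y * x_j ∈ D_i` for `i ≤ j`. -/
lemma colon_extend (i j : Fin s) (hij : i ≤ j) (y : R) (hy : y * x i ∈ Dn I x i) :
    y * x j ∈ Dn I x i := by
  have h1 : y * (x i * x j) ∈ Dn I x i := by
    have := Ideal.mul_mem_right (x j) _ hy
    rwa [mul_assoc] at this
  exact (hd i j hij y).1 h1

/-- Key claim: if `z ∈ (x_i, ..., x_{t-1})` and `z * x_i ∈ D_i` then `z ∈ D_i`. -/
lemma key_claim (i : Fin s) (t : ℕ) :
    ∀ z ∈ Fn x (i : ℕ) t, z * x i ∈ Dn I x (i : ℕ) → z ∈ Dn I x (i : ℕ) := by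
  induction t with
  | zero =>
    intro z hz _
    rw [Fn_zero, Ideal.mem_bot] at hz
    exact hz ▸ (Dn I x (i : ℕ)).zero_mem
  | succ t ih =>
    intro z hz hzx
    by_cases h : (i : ℕ) ≤ t ∧ t < s
    · obtain ⟨hit, hts⟩ := h
      set t' : Fin s := ⟨t, hts⟩ with ht'
      rw [Fn_succ hit hts] at hz
      rcases Submodule.mem_sup.1 hz with ⟨w, hw, u, hu, rfl⟩
      rcases Ideal.mem_span_singleton'.1 hu with ⟨a, rfl⟩
      -- z = w + a * x t'
      have hit' : i ≤ t' := hit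
      have hzt : (w + a * x t') * x t' ∈ Dn I x (i : ℕ) :=
        colon_extend hd i t' hit' _ hzx
      have hwt : w * x t' ∈ Dn I x t := by
        have hw' : w ∈ Dn I x t := Fn_le_Dn hw
        exact Ideal.mul_mem_right _ _ hw'
      have haxx : a * (x t' * x t') ∈ Dn I x t := by
        have h1 : (w + a * x t') * x t' - w * x t' ∈ Dn I x t :=
          Submodule.sub_mem _ (Dn_mono hit hzt) hwt
        have h2 : (w + a * x t') * x t' - w * x t' = a * (x t' * x t') := by ring
        rwa [h2] at h1
      have haxt : a * x t' ∈ Dn I x t := (hd t' t' le_rfl a).1 haxx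
      -- D_t = D_i ⊔ F_i^t
      rw [Dn_eq_sup_Fn hit] at haxt
      rcases Submodule.mem_sup.1 haxt with ⟨d, hd', w2, hw2, heq⟩
      have hzd : w + a * x t' - d ∈ Fn x (i : ℕ) t := by
        have : w + a * x t' - d = w + w2 := by
          rw [← heq]; ring
        rw [this]
        exact Submodule.add_mem _ hw hw2
      have hzdx : (w + a * x t' - d) * x i ∈ Dn I x (i : ℕ) := by
        rw [sub_mul]
        exact Submodule.sub_mem _ hzx (Ideal.mul_mem_right _ _ hd')
      have := ih _ hzd hzdx
      have hfin : w + a * x t' = (w + a * x t' - d) + d := by ring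
      rw [hfin]
      exact Submodule.add_mem _ this hd'
    · rw [Fn_succ_of_not h] at hz
      exact ih z hz hzx

/-- Lemma A: `(D_i : x_i) ∩ J ⊆ D_i`. -/
lemma lemmaA (i : Fin s) (y : R) (hy : y ∈ Ideal.span (Set.range x))
    (hyx : y * x i ∈ Dn I x (i : ℕ)) : y ∈ Dn I x (i : ℕ) := by
  have h1 : y ∈ Dn I x (i : ℕ) ⊔ Fn x (i : ℕ) s :=
    span_range_eq_Dn_sup_Fn (le_of_lt i.isLt) hy
  rcases Submodule.mem_sup.1 h1 with ⟨d, hd', z, hz, rfl⟩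
  have hzx : z * x i ∈ Dn I x (i : ℕ) := by
    have : z * x i = (d + z) * x i - d * x i := by ring
    rw [this]
    exact Submodule.sub_mem _ hyx (Ideal.mul_mem_right _ _ hd')
  exact Submodule.add_mem _ hd' (key_claim hd i s z hz hzx)

/-- Huneke's intersection theorem: `D_t ∩ J^{k+1} ⊆ D_t * J^k`. -/
lemma star : ∀ k : ℕ, ∀ t : ℕ, t ≤ s →
    Dn I x t ⊓ (Ideal.span (Set.range x)) ^ (k + 1) ≤
      Dn I x t * (Ideal.span (Set.range x)) ^ k := by
  set J : Ideal R := Ideal.span (Set.range x) with hJ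
  have hJle : ∀ t : ℕ, s ≤ t → J ≤ Dn I x t := by
    intro t hst
    have : Set.range x = x '' {l : Fin s | (l : ℕ) < t} := by
      ext r
      constructor
      · rintro ⟨l, rfl⟩; exact ⟨l, lt_of_lt_of_le l.isLt hst, rfl⟩
      · rintro ⟨l, -, rfl⟩; exact ⟨l, rfl⟩
    rw [hJ, this]
    exact le_sup_right
  intro k
  induction k with
  | zero =>
    -- downward induction on t
    suffices h : ∀ d t : ℕ, s ≤ t + d → t ≤ s → Dn I x t ⊓ J ^ 1 ≤ Dn I x t * J ^ 0 by
      intro t ht; exact h (s - t) t (by omega) ht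
    intro d
    induction d with
    | zero =>
      intro t hst _
      simp only [Nat.add_zero] at hst
      calc Dn I x t ⊓ J ^ 1 ≤ J ^ 1 := inf_le_right
        _ = J := pow_one J
        _ ≤ Dn I x t := hJle t hst
        _ = Dn I x t * J ^ 0 := by rw [pow_zero, mul_one]
    | succ d ihd =>
      intro t hst hts
      by_cases h : s ≤ t + d
      · exact ihd t h hts
      · have hts' : t < s := by omega
        have hstep := ihd (t + 1) (by omega) (by omega)
        intro y hy
        obtain ⟨hy1, hy2⟩ := hy
        have hy3 : y ∈ Dn I x (t + 1) ⊓ J ^ 1 := ⟨Dn_mono (Nat.le_succ t) hy1, hy2⟩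
        have hy4 : y ∈ Dn I x (t + 1) * J ^ 0 := hstep hy3
        rw [pow_zero, mul_one, Dn_succ hts'] at hy4
        rcases Submodule.mem_sup.1 hy4 with ⟨v, hv, u, hu, rfl⟩
        rcases Ideal.mem_span_singleton'.1 hu with ⟨a, rfl⟩
        have : a * x ⟨t, hts'⟩ ∈ Dn I x t := by
          have h1 : a * x ⟨t, hts'⟩ = (v + a * x ⟨t, hts'⟩) - v := by ring
          rw [h1]
          exact Submodule.sub_mem _ hy1 hv
        rw [pow_zero, mul_one]
        exact Submodule.add_mem _ hv this
  | succ k ihk =>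
    suffices h : ∀ d t : ℕ, s ≤ t + d → t ≤ s →
        Dn I x t ⊓ J ^ (k + 2) ≤ Dn I x t * J ^ (k + 1) by
      intro t ht; exact h (s - t) t (by omega) ht
    intro d
    induction d with
    | zero =>
      intro t hst _
      simp only [Nat.add_zero] at hst
      calc Dn I x t ⊓ J ^ (k + 2) ≤ J ^ (k + 2) := inf_le_right
        _ = J * J ^ (k + 1) := by rw [← pow_succ']
        _ ≤ Dn I x t * J ^ (k + 1) := Ideal.mul_mono_left (hJle t hst)
    | succ d ihd =>
      intro t hst hts
      by_cases h : s ≤ t + d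
      · exact ihd t h hts
      · have hts' : t < s := by omega
        set t' : Fin s := ⟨t, hts'⟩ with ht'
        have hstep := ihd (t + 1) (by omega) (by omega)
        intro y hy
        obtain ⟨hy1, hy2⟩ := hy
        have hy3 : y ∈ Dn I x (t + 1) ⊓ J ^ (k + 2) := ⟨Dn_mono (Nat.le_succ t) hy1, hy2⟩
        have hy4 : y ∈ Dn I x (t + 1) * J ^ (k + 1) := hstep hy3
        rw [Dn_succ hts', Ideal.sup_mul] at hy4
        rcases Submodule.mem_sup.1 hy4 with ⟨v, hv, u, hu, rfl⟩
        rcases Ideal.mem_span_singleton_mul.1 hu with ⟨w, hw, rfl⟩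
        -- y = v + x t' * w ; v ∈ D_t J^{k+1}, w ∈ J^{k+1}
        have hxw : x t' * w ∈ Dn I x t := by
          have h1 : x t' * w = (v + x t' * w) - v := by ring
          rw [h1]
          exact Submodule.sub_mem _ hy1 (Ideal.mul_le_left hv)
        have hwJ : w ∈ J := (Ideal.pow_le_self (Nat.succ_ne_zero k)) hw
        have hwD : w ∈ Dn I x t := by
          have := lemmaA hd t' w hwJ (by rwa [mul_comm] at hxw)
          exact this
        have hwDJ : w ∈ Dn I x t * J ^ k := ihk t hts ⟨hwD, hw⟩
        have hu' : x t' * w ∈ Dn I x t * J ^ (k + 1) := by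
          have hx't : x t' ∈ J := Ideal.subset_span ⟨t', rfl⟩
          have h1 : x t' * w ∈ J * (Dn I x t * J ^ k) :=
            Ideal.mul_mem_mul hx't hwDJ
          have h2 : J * (Dn I x t * J ^ k) = Dn I x t * J ^ (k + 1) := by
            rw [pow_succ]
            ring
          rwa [h2] at h1
        exact Submodule.add_mem _ hv hu'

lemma huneke_intersection (m : ℕ) :
    I ⊓ (Ideal.span (Set.range x)) ^ (m + 1) ≤ I * (Ideal.span (Set.range x)) ^ m := by
  have := star hd m 0 (Nat.zero_le s)
  rwa [Dn_zero] at this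

end WithHd

end HunekeAux

open IsLocalRing Filter

theorem statement8 (R : Type) [CommRing R] [IsNoetherianRing R] [IsLocalRing R]
    (s : ℕ) (I : Ideal R) (x : Fin s → R)
    (hdseq : ∀ i j : Fin s, i ≤ j →
      Submodule.colon
        (Ideal.span {z : R ⧸ I | ∃ l : Fin s, l < i ∧ z = Ideal.Quotient.mk I (x l)})
        (Ideal.span {Ideal.Quotient.mk I (x i) * Ideal.Quotient.mk I (x j)}) =
      Submodule.colon
        (Ideal.span {z : R ⧸ I | ∃ l : Fin s, l < i ∧ z = Ideal.Quotient.mk I (x l)})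
        (Ideal.span {Ideal.Quotient.mk I (x j)}))
    (J' : Ideal R) (hJ' : J' = Ideal.span (Set.range x)) :
    ∀ m : ℕ, (I ⊔ J') ^ (m + 1) ⊓ I = I * (I ⊔ J') ^ m := by
  -- translate the d-sequence hypothesis to the ring R
  have hd : ∀ i j : Fin s, i ≤ j → ∀ r : R,
      (r * (x i * x j) ∈ Dn I x i ↔ r * x j ∈ Dn I x i) := by
    intro i j hij r
    set N : Ideal (R ⧸ I) :=
      Ideal.span {z : R ⧸ I | ∃ l : Fin s, l < i ∧ z = Ideal.Quotient.mk I (x l)} with hN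
    have hNmap : N = Ideal.map (Ideal.Quotient.mk I)
        (Ideal.span (x '' {l : Fin s | (l : ℕ) < (i : ℕ)})) := by
      rw [Ideal.map_span, hN]
      congr 1
      ext z
      simp only [Set.mem_setOf_eq, Set.mem_image]
      constructor
      · rintro ⟨l, hl, rfl⟩
        exact ⟨x l, ⟨l, hl, rfl⟩, rfl⟩
      · rintro ⟨_, ⟨l, hl, rfl⟩, rfl⟩
        exact ⟨l, hl, rfl⟩
    have hcomap : ∀ a : R, (a ∈ Dn I x (i : ℕ) ↔ Ideal.Quotient.mk I a ∈ N) := by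
      intro a
      rw [hNmap]
      have : Ideal.comap (Ideal.Quotient.mk I)
          (Ideal.map (Ideal.Quotient.mk I) (Ideal.span (x '' {l : Fin s | (l : ℕ) < (i : ℕ)})))
          = Ideal.span (x '' {l : Fin s | (l : ℕ) < (i : ℕ)}) ⊔ I := by
        rw [Ideal.comap_map_of_surjective _ Ideal.Quotient.mk_surjective]
        congr 1
        exact Ideal.mk_ker
      constructor
      · intro ha
        have ha' : a ∈ Ideal.span (x '' {l : Fin s | (l : ℕ) < (i : ℕ)}) ⊔ I := by
          rw [sup_comm]; exact ha
        rw [← this] at ha'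
        exact ha'
      · intro ha
        have ha' : a ∈ Ideal.comap (Ideal.Quotient.mk I)
            (Ideal.map (Ideal.Quotient.mk I)
              (Ideal.span (x '' {l : Fin s | (l : ℕ) < (i : ℕ)}))) := ha
        rw [this] at ha'
        rw [Dn, sup_comm]
        exact ha'
    have h1 := hdseq i j hij
    constructor
    · intro h
      have h2 : Ideal.Quotient.mk I (r * (x i * x j)) ∈ N := (hcomap _).1 h
      have h3 : Ideal.Quotient.mk I r ∈
          Submodule.colon N (Ideal.span {Ideal.Quotient.mk I (x i) * Ideal.Quotient.mk I (x j)}) := by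
        rw [Ideal.mem_colon_span_singleton]
        rw [map_mul, map_mul] at h2
        exact h2
      rw [h1, Ideal.mem_colon_span_singleton] at h3
      have h4 : Ideal.Quotient.mk I (r * x j) ∈ N := by rw [map_mul]; exact h3
      exact (hcomap _).2 h4
    · intro h
      have h2 : Ideal.Quotient.mk I (r * x j) ∈ N := (hcomap _).1 h
      have h3 : Ideal.Quotient.mk I r ∈
          Submodule.colon N (Ideal.span {Ideal.Quotient.mk I (x j)}) := by
        rw [Ideal.mem_colon_span_singleton]
        rw [map_mul] at h2
        exact h2
      rw [← h1, Ideal.mem_colon_span_singleton] at h3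
      have h4 : Ideal.Quotient.mk I (r * (x i * x j)) ∈ N := by
        rw [map_mul, map_mul]; exact h3
      exact (hcomap _).2 h4
  subst hJ'
  set J : Ideal R := Ideal.span (Set.range x) with hJ
  -- expansion lemma
  have hexp : ∀ m : ℕ, (I ⊔ J) ^ (m + 1) ≤ I * (I ⊔ J) ^ m ⊔ J ^ (m + 1) := by
    intro m
    induction m with
    | zero => simp
    | succ m ih =>
      calc (I ⊔ J) ^ (m + 2) = (I ⊔ J) ^ (m + 1) * (I ⊔ J) := pow_succ _ _
        _ ≤ (I * (I ⊔ J) ^ m ⊔ J ^ (m + 1)) * (I ⊔ J) := Ideal.mul_mono_left ih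
        _ = I * (I ⊔ J) ^ m * (I ⊔ J) ⊔ J ^ (m + 1) * (I ⊔ J) := Ideal.sup_mul _ _ _
        _ = I * (I ⊔ J) ^ (m + 1) ⊔ (J ^ (m + 1) * I ⊔ J ^ (m + 2)) := by
            rw [mul_assoc, ← pow_succ, Ideal.mul_sup, ← pow_succ]
        _ ≤ I * (I ⊔ J) ^ (m + 1) ⊔ J ^ (m + 2) := by
            apply sup_le le_sup_left
            apply sup_le _ le_sup_right
            apply le_sup_of_le_left
            rw [mul_comm]
            exact Ideal.mul_mono_right (Ideal.pow_right_mono le_sup_right _)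
  intro m
  apply le_antisymm
  · calc (I ⊔ J) ^ (m + 1) ⊓ I ≤ (I * (I ⊔ J) ^ m ⊔ J ^ (m + 1)) ⊓ I :=
        inf_le_inf_right I (hexp m)
      _ = I * (I ⊔ J) ^ m ⊔ (J ^ (m + 1) ⊓ I) :=
        sup_inf_assoc_of_le _ Ideal.mul_le_left
      _ ≤ I * (I ⊔ J) ^ m ⊔ I * J ^ m := by
        apply sup_le le_sup_left
        apply le_sup_of_le_right
        rw [inf_comm]
        exact huneke_intersection hd m
      _ ≤ I * (I ⊔ J) ^ m := by
        apply sup_le le_rfl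
        exact Ideal.mul_mono_right (Ideal.pow_right_mono le_sup_right m)
  · apply le_inf
    · calc I * (I ⊔ J) ^ m ≤ (I ⊔ J) * (I ⊔ J) ^ m := Ideal.mul_mono_left le_sup_left
        _ = (I ⊔ J) ^ (m + 1) := by rw [← pow_succ']
    · exact Ideal.mul_le_left
end

section
/- Let (R, m) be a Noetherian local ring, I and I' ideals of R, K' an ideal with K' = I + J' = I' + J' for some ideal J', and suppose K'^{m+1} ∩ I = I K'^m, K'^{m+1} ∩ I' = I' K'^m, and K' m^a + I = K' m^a + I' for a given a ≥ 0 and all m ≥ 0 (where also J' m^a + I = m^{a+t} + I = m^{a+t} + I' = J' m^a + I' for suitable t). Then ℓ((K'^{m+1}+I)/(K'^{m+1} m^a + I)) = ℓ((K'^{m+1}+I')/(K'^{m+1} m^a + I')) for all m ≥ 0. -/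
open IsLocalRing Filter

lemma modLen_eq_of_equiv {R M N : Type} [CommRing R] [AddCommGroup M] [Module R M]
    [AddCommGroup N] [Module R N] (e : M ≃ₗ[R] N) : modLen R M = modLen R N :=
  Order.krullDim_eq_of_orderIso (Submodule.orderIsoMapComap e)

/-- The image of `A ⊔ I` in `R/(B ⊔ I)` is isomorphic to `A / (comap A.subtype (B ⊔ I))`. -/
noncomputable def auxEquiv (R : Type) [CommRing R] (A B I : Ideal R) :
    (Submodule.map (B ⊔ I).mkQ ((A ⊔ I : Ideal R) : Submodule R R)) ≃ₗ[R]
      (A ⧸ Submodule.comap A.subtype ((B ⊔ I : Ideal R) : Submodule R R)) := by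
  have hmap : Submodule.map (B ⊔ I).mkQ ((A ⊔ I : Ideal R) : Submodule R R)
      = Submodule.map (B ⊔ I).mkQ (A : Submodule R R) := by
    rw [Submodule.map_sup]
    have : Submodule.map (B ⊔ I).mkQ (I : Submodule R R) = ⊥ := by
      rw [eq_bot_iff, Submodule.map_le_iff_le_comap, Submodule.comap_bot, Submodule.ker_mkQ]
      exact le_sup_right
    rw [this, sup_bot_eq]
  let f := ((B ⊔ I).mkQ.comp (Submodule.subtype (A : Submodule R R)))
  have hr : LinearMap.range f = Submodule.map (B ⊔ I).mkQ (A : Submodule R R) := by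
    rw [LinearMap.range_comp, Submodule.range_subtype]
  have hk : LinearMap.ker f = Submodule.comap A.subtype ((B ⊔ I : Ideal R) : Submodule R R) := by
    rw [LinearMap.ker_comp, Submodule.ker_mkQ]
  exact (LinearEquiv.ofEq _ _ (hmap.trans hr.symm)).trans
    ((f.quotKerEquivRange).symm.trans (Submodule.quotEquivOfEq _ _ hk))

theorem statement9 (R : Type) [CommRing R] [IsNoetherianRing R] [IsLocalRing R]
    (I I' J' K' : Ideal R) (a : ℕ)
    (hK : K' = I ⊔ J') (hK' : K' = I' ⊔ J')
    (h1 : ∀ m : ℕ, K' ^ (m + 1) ⊓ I = I * K' ^ m)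
    (h2 : ∀ m : ℕ, K' ^ (m + 1) ⊓ I' = I' * K' ^ m)
    (h3 : K' * maximalIdeal R ^ a ⊔ I = K' * maximalIdeal R ^ a ⊔ I') :
    ∀ m : ℕ,
      modLen R (Submodule.map (K' ^ (m + 1) * maximalIdeal R ^ a ⊔ I).mkQ
          ((K' ^ (m + 1) ⊔ I) : Ideal R)) =
      modLen R (Submodule.map (K' ^ (m + 1) * maximalIdeal R ^ a ⊔ I').mkQ
          ((K' ^ (m + 1) ⊔ I') : Ideal R)) := by
  intro m
  set μ : Ideal R := maximalIdeal R ^ a with hμ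
  set A : Ideal R := K' ^ (m + 1) with hA
  set B : Ideal R := A * μ with hB
  have hBA : B ≤ A := Ideal.mul_le_left
  -- the key kernel computation
  have hker : ∀ (J : Ideal R), A ⊓ J = J * K' ^ m →
      Submodule.comap A.subtype ((B ⊔ J : Ideal R) : Submodule R R)
        = Submodule.comap A.subtype ((B ⊔ J * K' ^ m : Ideal R) : Submodule R R) := by
    intro J hJ
    have h1' : (A : Submodule R R) ⊓ (B ⊔ J) = ((B ⊔ J * K' ^ m : Ideal R) : Submodule R R) := by
      rw [inf_comm, sup_inf_assoc_of_le _ hBA]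
      rw [show (J : Submodule R R) ⊓ A = ((J * K' ^ m : Ideal R) : Submodule R R) from by
        rw [inf_comm]; exact_mod_cast hJ]
    calc Submodule.comap A.subtype ((B ⊔ J : Ideal R) : Submodule R R)
        = Submodule.comap A.subtype ((A : Submodule R R) ⊓ (B ⊔ J)) := by
          rw [Submodule.comap_inf, Submodule.comap_subtype_self, top_inf_eq]
      _ = _ := by rw [h1']
  have key : B ⊔ I * K' ^ m = B ⊔ I' * K' ^ m := by
    have e1 : ∀ J : Ideal R, B ⊔ J * K' ^ m = K' ^ m * (K' * μ ⊔ J) := by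
      intro J
      rw [Ideal.mul_sup, ← mul_assoc, ← pow_succ, mul_comm (K' ^ m) J]
    rw [e1 I, e1 I', h3]
  have hkk : Submodule.comap A.subtype ((B ⊔ I : Ideal R) : Submodule R R)
      = Submodule.comap A.subtype ((B ⊔ I' : Ideal R) : Submodule R R) := by
    rw [hker I (h1 m), hker I' (h2 m), key]
  exact modLen_eq_of_equiv <| (auxEquiv R A B I).trans <|
    (Submodule.quotEquivOfEq _ _ hkk).trans (auxEquiv R A B I').symm
end
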